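/- arXiv:2509.20638 — 3 statements merged into one kernel-verified Lean document; each statement's English description precedes it below -/
import Mathlib

section
/- Let L ≥ 2 be an integer, let u_k = −1 + 2k/L for k = 0,…,L be equispaced knots with spacing Δ = 2/L, let h_k(x) = max(0, 1 − |x − u_k|/Δ) and ψ_k(x) = ∫_{−1}^{x} h_k(t) dt. For any real coefficients ξ_0,…,ξ_L, the function g(x) = Σ_{k=0}^{L} ξ_k ψ_k(x) is monotone nondecreasing on the interval [−1,1] if and only if ξ_k ≥ 0 for every k = 0,…,L. -/
open MeasureTheory

lemma aux_deriv_nonneg_of_monotoneOn {g : ℝ → ℝ} {a b p d : ℝ} (hab : a < b)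
    (hp : p ∈ Set.Icc a b) (hm : MonotoneOn g (Set.Icc a b))
    (hd : HasDerivAt g d p) : 0 ≤ d := by
  rcases lt_or_eq_of_le hp.2 with hpb | hpb
  · have hslope : Filter.Tendsto (slope g p) (nhdsWithin p (Set.Ioi p)) (nhds d) :=
      (hasDerivAt_iff_tendsto_slope.mp hd).mono_left
        (nhdsWithin_mono _ (by intro x hx; exact Set.mem_compl_singleton_iff.mpr (ne_of_gt (Set.mem_Ioi.mp hx))))
    refine ge_of_tendsto hslope ?_
    filter_upwards [Ioo_mem_nhdsGT_of_mem ⟨le_refl p, hpb⟩] with x hx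
    have hx1 : p < x := hx.1
    have hxI : x ∈ Set.Icc a b := ⟨le_trans hp.1 hx1.le, hx.2.le⟩
    have hgx := hm hp hxI hx1.le
    rw [slope_def_field]
    exact div_nonneg (by linarith) (by linarith)
  · have hap : a < p := hpb ▸ hab
    have hslope : Filter.Tendsto (slope g p) (nhdsWithin p (Set.Iio p)) (nhds d) :=
      (hasDerivAt_iff_tendsto_slope.mp hd).mono_left
        (nhdsWithin_mono _ (by intro x hx; exact Set.mem_compl_singleton_iff.mpr (ne_of_lt (Set.mem_Iio.mp hx))))
    refine ge_of_tendsto hslope ?_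
    filter_upwards [Ioo_mem_nhdsLT_of_mem ⟨hap, le_refl p⟩] with x hx
    have hx2 : x < p := hx.2
    have hxI : x ∈ Set.Icc a b := ⟨hx.1.le, le_trans hx2.le hp.2⟩
    have hgx := hm hxI hp hx2.le
    rw [slope_def_field]
    exact div_nonneg_of_nonpos (by linarith) (by linarith)

/-- For equispaced knots `u k = -1 + 2k/L` with spacing `Δ = 2/L`,
hat functions `h k` and their integrals `ψ k`, the linear combination
`g x = ∑ k, ξ k * ψ k x` is monotone nondecreasing on `[-1, 1]` if and only if
all coefficients `ξ k` (for `k = 0, …, L`) are nonnegative. -/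
theorem hat_basis_monotone_iff_nonneg_coeffs
    (L : ℕ) (hL : 2 ≤ L)
    (u : ℕ → ℝ) (hu : ∀ k, u k = -1 + 2 * (k : ℝ) / (L : ℝ))
    (Δ : ℝ) (hΔ : Δ = 2 / (L : ℝ))
    (h : ℕ → ℝ → ℝ) (hh : ∀ k x, h k x = max 0 (1 - |x - u k| / Δ))
    (ψ : ℕ → ℝ → ℝ) (hψ : ∀ k x, ψ k x = ∫ t in (-1 : ℝ)..x, h k t)
    (ξ : ℕ → ℝ)
    (g : ℝ → ℝ) (hg : ∀ x, g x = ∑ k ∈ Finset.range (L + 1), ξ k * ψ k x) :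
    MonotoneOn g (Set.Icc (-1 : ℝ) 1) ↔ ∀ k ≤ L, 0 ≤ ξ k := by
  have hLpos : (0 : ℝ) < L := by
    have : 0 < L := by omega
    exact_mod_cast this
  have hΔpos : 0 < Δ := by rw [hΔ]; positivity
  have hcont : ∀ k, Continuous (h k) := by
    intro k
    have heq : h k = fun x => max 0 (1 - |x - u k| / Δ) := funext (hh k)
    rw [heq]
    exact continuous_const.max (by fun_prop)
  have hnonneg : ∀ k x, 0 ≤ h k x := by
    intro k x; rw [hh]; exact le_max_left _ _
  have hint : ∀ (k : ℕ) (a b : ℝ), IntervalIntegrable (h k) volume a b :=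
    fun k a b => (hcont k).intervalIntegrable a b
  have hderivψ : ∀ (k : ℕ) (x : ℝ), HasDerivAt (ψ k) (h k x) x := by
    intro k x
    have heq : ψ k = fun y => ∫ t in (-1 : ℝ)..y, h k t := funext (hψ k)
    rw [heq]
    exact intervalIntegral.integral_hasDerivAt_right (hint k _ _)
      ((hcont k).aestronglyMeasurable.stronglyMeasurableAtFilter)
      (hcont k).continuousAt
  have hderivg : ∀ x, HasDerivAt g (∑ k ∈ Finset.range (L + 1), ξ k * h k x) x := by
    intro x
    have heq : g = fun y => ∑ k ∈ Finset.range (L + 1), ξ k * ψ k y := funext hg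
    rw [heq]
    exact HasDerivAt.fun_sum (fun k _ => (hderivψ k x).const_mul (ξ k))
  constructor
  · intro hmono k hk
    have hkI : u k ∈ Set.Icc (-1 : ℝ) 1 := by
      rw [hu]
      constructor
      · have : (0 : ℝ) ≤ (k : ℝ) := Nat.cast_nonneg k
        have : (0 : ℝ) ≤ 2 * (k : ℝ) / L := by positivity
        linarith
      · have hkL : (k : ℝ) ≤ L := Nat.cast_le.mpr hk
        have : 2 * (k : ℝ) / L ≤ 2 := by
          rw [div_le_iff₀ hLpos]; linarith
        linarith
    -- the derivative at u k equals ξ k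
    have hzero : ∀ j, j ≠ k → h j (u k) = 0 := by
      intro j hjk
      have h1 : (1 : ℝ) ≤ |(k : ℝ) - (j : ℝ)| := by
        rcases lt_or_gt_of_ne hjk with hlt | hlt
        · have : (j : ℝ) + 1 ≤ (k : ℝ) := by exact_mod_cast hlt
          rw [abs_of_nonneg (by linarith)]; linarith
        · have : (k : ℝ) + 1 ≤ (j : ℝ) := by exact_mod_cast hlt
          rw [abs_of_nonpos (by linarith)]; linarith
      have habs : Δ ≤ |u k - u j| := by
        have heq2 : u k - u j = 2 * ((k : ℝ) - (j : ℝ)) / L := by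
          rw [hu, hu]; ring
        rw [heq2, hΔ, abs_div, abs_mul, abs_two, abs_of_pos hLpos]
        rw [div_le_div_iff₀ hLpos hLpos]
        nlinarith
      rw [hh]
      apply max_eq_left
      have : 1 ≤ |u k - u j| / Δ := (one_le_div hΔpos).mpr habs
      linarith
    have hone : h k (u k) = 1 := by
      rw [hh]; simp
    have hsum : ∑ j ∈ Finset.range (L + 1), ξ j * h j (u k) = ξ k := by
      rw [Finset.sum_eq_single_of_mem k (Finset.mem_range.mpr (by omega))
        (fun j _ hjk => by rw [hzero j hjk, mul_zero])]
      rw [hone, mul_one]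
    have hd : HasDerivAt g (ξ k) (u k) := hsum ▸ hderivg (u k)
    exact aux_deriv_nonneg_of_monotoneOn (by norm_num) hkI hmono hd
  · intro hξ x hx y hy hxy
    rw [hg, hg]
    apply Finset.sum_le_sum
    intro k hk
    have hξk : 0 ≤ ξ k := hξ k (by simpa using Nat.lt_succ_iff.mp (Finset.mem_range.mp hk))
    have hmonoψ : ψ k x ≤ ψ k y := by
      have hadd : (∫ t in (-1 : ℝ)..x, h k t) + ∫ t in x..y, h k t
          = ∫ t in (-1 : ℝ)..y, h k t :=
        intervalIntegral.integral_add_adjacent_intervals (hint k _ _) (hint k _ _)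
      have hnn : 0 ≤ ∫ t in x..y, h k t :=
        intervalIntegral.integral_nonneg hxy (fun t _ => hnonneg k t)
      rw [hψ, hψ]
      linarith
    exact mul_le_mul_of_nonneg_left hmonoψ hξk
end

section
/- Let p ≥ 1, let K ⊆ ℝ^p be a bounded convex set with nonempty interior, let g₁, g₂ : ℝ → ℝ be continuous monotone nondecreasing functions, and let β₁, β₂ ∈ ℝ^p satisfy ‖β₁‖ = ‖β₂‖ = 1. Suppose the map x ↦ g₁(⟪β₁, x⟫) is not constant on K, and that g₁(⟪β₁, x⟫) = g₂(⟪β₂, x⟫) for every x ∈ K. Then β₁ = β₂ and g₁(t) = g₂(t) for every t in the set {⟪β₁, x⟫ : x ∈ K}. -/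
open scoped RealInnerProductSpace

/-- Identifiability of the single-index part of the ST-GP model.
If `K ⊆ ℝ^p` is bounded convex with nonempty interior, `g₁, g₂` are continuous
monotone nondecreasing links, `‖β₁‖ = ‖β₂‖ = 1`, `x ↦ g₁⟪β₁, x⟫` is not
constant on `K`, and `g₁⟪β₁, x⟫ = g₂⟪β₂, x⟫` on `K`, then `β₁ = β₂` and
`g₁ = g₂` on `{⟪β₁, x⟫ : x ∈ K}`. -/
theorem single_index_identifiability
    (p : ℕ) (hp : 1 ≤ p)
    (K : Set (EuclideanSpace ℝ (Fin p)))
    (hKbdd : Bornology.IsBounded K) (hKconv : Convex ℝ K)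
    (hKint : (interior K).Nonempty)
    (g₁ g₂ : ℝ → ℝ) (hg₁c : Continuous g₁) (hg₂c : Continuous g₂)
    (hg₁m : Monotone g₁) (hg₂m : Monotone g₂)
    (β₁ β₂ : EuclideanSpace ℝ (Fin p)) (hβ₁ : ‖β₁‖ = 1) (hβ₂ : ‖β₂‖ = 1)
    (hnc : ¬ ∃ c : ℝ, ∀ x ∈ K, g₁ ⟪β₁, x⟫ = c)
    (heq : ∀ x ∈ K, g₁ ⟪β₁, x⟫ = g₂ ⟪β₂, x⟫) :
    β₁ = β₂ ∧ ∀ t ∈ (fun x => ⟪β₁, x⟫) '' K, g₁ t = g₂ t := by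
  have hbb : β₁ = β₂ := by
    by_contra hne
    set v : EuclideanSpace ℝ (Fin p) := β₁ - β₂ with hv
    have hv0 : v ≠ 0 := sub_ne_zero.mpr hne
    have hvnorm : (0:ℝ) < ‖v‖ := norm_pos_iff.mpr hv0
    set a : ℝ := ⟪β₁, v⟫ with ha
    have hinner2 : ⟪β₂, v⟫ = -a := by
      have h1 : ⟪β₁, v⟫ = ⟪β₁, β₁⟫ - ⟪β₁, β₂⟫ := by rw [hv, inner_sub_right]
      have h2 : ⟪β₂, v⟫ = ⟪β₂, β₁⟫ - ⟪β₂, β₂⟫ := by rw [hv, inner_sub_right]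
      have h3 : ⟪β₁, β₁⟫ = (1:ℝ) := by
        rw [real_inner_self_eq_norm_sq, hβ₁]; norm_num
      have h4 : ⟪β₂, β₂⟫ = (1:ℝ) := by
        rw [real_inner_self_eq_norm_sq, hβ₂]; norm_num
      have h5 : ⟪β₂, β₁⟫ = ⟪β₁, β₂⟫ := real_inner_comm _ _
      rw [ha, h1, h2, h3, h4, h5]; ring
    have hapos : (0:ℝ) < a := by
      have hns : ‖v‖ ^ 2 = 2 * a := by
        have := norm_sub_sq_real β₁ β₂
        have h3 : ⟪β₁, β₁⟫ = (1:ℝ) := by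
          rw [real_inner_self_eq_norm_sq, hβ₁]; norm_num
        have h1 : a = ⟪β₁, β₁⟫ - ⟪β₁, β₂⟫ := by rw [ha, hv, inner_sub_right]
        rw [← hv] at this
        rw [this, hβ₁, hβ₂, h1, h3]; ring
      nlinarith
    -- local lemma: at each interior point, g₁ is constant slightly to the right
    have hloc : ∀ z ∈ interior K, ∃ ε > (0:ℝ), g₁ (⟪β₁, z⟫ + ε) = g₁ ⟪β₁, z⟫ := by
      intro z hz
      obtain ⟨δ, hδ, hball⟩ := Metric.isOpen_iff.mp isOpen_interior z hz
      set τ : ℝ := δ / (2 * ‖v‖) with hτdef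
      have hτ : 0 < τ := by positivity
      have hdist : dist (z + τ • v) z < δ := by
        have hτv : τ * ‖v‖ = δ / 2 := by
          rw [hτdef]; field_simp; try ring
        rw [dist_eq_norm, add_sub_cancel_left, norm_smul, Real.norm_eq_abs,
          abs_of_pos hτ]
        rw [hτv]; linarith
      have hzK : z + τ • v ∈ K := interior_subset (hball (Metric.mem_ball.mpr hdist))
      refine ⟨τ * a, by positivity, ?_⟩
      have h1 := heq z (interior_subset hz)
      have h2 := heq (z + τ • v) hzK
      have e1 : ⟪β₁, z + τ • v⟫ = ⟪β₁, z⟫ + τ * a := by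
        rw [inner_add_right, real_inner_smul_right, ha]
      have e2 : ⟪β₂, z + τ • v⟫ = ⟪β₂, z⟫ - τ * a := by
        rw [inner_add_right, real_inner_smul_right, hinner2]; ring
      rw [e1, e2] at h2
      have hle1 : g₂ (⟪β₂, z⟫ - τ * a) ≤ g₂ ⟪β₂, z⟫ := hg₂m (by nlinarith)
      have hle2 : g₁ ⟪β₁, z⟫ ≤ g₁ (⟪β₁, z⟫ + τ * a) := hg₁m (by nlinarith)
      linarith
    -- g₁ ∘ ⟪β₁,·⟫ is constant on the interior of K
    have key : ∀ x ∈ interior K, ∀ y ∈ interior K,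
        ⟪β₁, x⟫ ≤ ⟪β₁, y⟫ → g₁ ⟪β₁, x⟫ = g₁ ⟪β₁, y⟫ := by
      intro x hx y hy hxy
      set sx : ℝ := ⟪β₁, x⟫ with hsx
      set sy : ℝ := ⟪β₁, y⟫ with hsy
      set S : Set ℝ := Set.Icc sx sy ∩ {t | g₁ t ≤ g₁ sx} with hS
      have hScomp : IsCompact S :=
        isCompact_Icc.inter_right (isClosed_le hg₁c continuous_const)
      have hSne : S.Nonempty := by
        refine ⟨sx, ⟨le_refl _, hxy⟩, ?_⟩
        simp
      set u : ℝ := sSup S with hu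
      have huS : u ∈ S := hScomp.sSup_mem hSne
      have hug : g₁ u = g₁ sx := le_antisymm huS.2 (hg₁m huS.1.1)
      have husy : u = sy := by
        by_contra hult
        have hult : u < sy := lt_of_le_of_ne huS.1.2 hult
        have hsxsy : sx < sy := lt_of_le_of_lt huS.1.1 hult
        set θ : ℝ := (u - sx) / (sy - sx) with hθ
        have hθ0 : 0 ≤ θ := by
          apply div_nonneg <;> linarith [huS.1.1]
        have hθ1 : θ ≤ 1 := by
          rw [hθ, div_le_one (by linarith)]; linarith
        set z : EuclideanSpace ℝ (Fin p) := (1 - θ) • x + θ • y with hz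
        have hzint : z ∈ interior K :=
          hKconv.interior hx hy (by linarith) hθ0 (by ring)
        have hsne : sy - sx ≠ 0 := by linarith
        have hθeq : θ * (sy - sx) = u - sx := by
          rw [hθ]; exact div_mul_cancel₀ _ hsne
        have hzinner : ⟪β₁, z⟫ = u := by
          rw [hz, inner_add_right, real_inner_smul_right, real_inner_smul_right,
            ← hsx, ← hsy]
          linear_combination hθeq
        obtain ⟨ε, hε, hεeq⟩ := hloc z hzint
        rw [hzinner] at hεeq
        have htS : min (u + ε) sy ∈ S := by
          constructor
          · exact ⟨le_trans huS.1.1 (le_min (by linarith) (le_of_lt hult)),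
              min_le_right _ _⟩
          · calc g₁ (min (u + ε) sy) ≤ g₁ (u + ε) := hg₁m (min_le_left _ _)
              _ = g₁ u := hεeq
              _ ≤ g₁ sx := le_of_eq hug
        have : min (u + ε) sy ≤ u := le_csSup hScomp.bddAbove htS
        have : u < min (u + ε) sy := lt_min (by linarith) hult
        linarith
      rw [← husy]; exact hug.symm
    have hconst : ∀ x ∈ interior K, ∀ y ∈ interior K, g₁ ⟪β₁, x⟫ = g₁ ⟪β₁, y⟫ := by
      intro x hx y hy
      rcases le_total (⟪β₁, x⟫ : ℝ) (⟪β₁, y⟫ : ℝ) with h | h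
      · exact key x hx y hy h
      · exact (key y hy x hx h).symm
    -- extend constancy to all of K by continuity, contradicting hnc
    obtain ⟨x₀, hx₀⟩ := hKint
    apply hnc
    refine ⟨g₁ ⟪β₁, x₀⟫, fun x hx => ?_⟩
    set c₀ : ℝ := ⟪β₁, x₀⟫ with hc₀
    set c₁ : ℝ := ⟪β₁, x⟫ with hc₁
    have hpath : ∀ t ∈ Set.Ico (0:ℝ) 1, g₁ ((1 - t) * c₀ + t * c₁) = g₁ c₀ := by
      intro t ht
      have hzint : (1 - t) • x₀ + t • x ∈ interior K :=
        hKconv.combo_interior_closure_mem_interior hx₀ (subset_closure hx)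
          (by linarith [ht.2]) ht.1 (by ring)
      have e : ⟪β₁, (1 - t) • x₀ + t • x⟫ = (1 - t) * c₀ + t * c₁ := by
        rw [inner_add_right, real_inner_smul_right, real_inner_smul_right]
      rw [← e]
      exact hconst _ hzint _ hx₀
    set φ : ℝ → ℝ := fun t => g₁ ((1 - t) * c₀ + t * c₁) with hφ
    have hφc : Continuous φ :=
      hg₁c.comp (((continuous_const.sub continuous_id).mul continuous_const).add
        (continuous_id.mul continuous_const))
    have hφ1 : φ 1 = g₁ c₁ := by simp [hφ]
    have h1 : Filter.Tendsto φ (nhdsWithin 1 (Set.Iio 1)) (nhds (g₁ c₁)) := by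
      rw [← hφ1]
      exact (hφc.tendsto 1).mono_left nhdsWithin_le_nhds
    have h2 : Filter.Tendsto φ (nhdsWithin 1 (Set.Iio 1)) (nhds (g₁ c₀)) := by
      apply Filter.Tendsto.congr' _ tendsto_const_nhds
      filter_upwards [Ioo_mem_nhdsLT_of_mem (by norm_num : (1:ℝ) ∈ Set.Ioc 0 1)]
        with t ht
      exact (hpath t ⟨le_of_lt ht.1, ht.2⟩).symm
    exact tendsto_nhds_unique h1 h2
  refine ⟨hbb, ?_⟩
  rintro t ⟨x, hx, rfl⟩
  have := heq x hx
  rw [← hbb] at this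
  exact this
end

section
/- Let p ≥ 1, let K ⊆ ℝ^p be a bounded convex set with nonempty interior, let g₁, g₂ : ℝ → ℝ be continuous monotone nondecreasing functions, let β₁, β₂ ∈ ℝ^p satisfy ‖β₁‖ = ‖β₂‖ = 1, and let a₁, a₂ ∈ ℝ. Suppose the map x ↦ g₁(⟪β₁, x⟫) is not constant on K, and that for every x ∈ K both g₁(⟪β₁, x⟫) = g₂(⟪β₂, x⟫) and a₁·g₁(⟪β₁, x⟫) = a₂·g₂(⟪β₂, x⟫) hold. If in addition g₁(t₀) = 0 for some t₀ ∈ {⟪β₁, x⟫ : x ∈ K}, then β₁ = β₂, g₁ = g₂ on the set {⟪β₁, x⟫ : x ∈ K}, and a₁ = a₂. -/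
open scoped RealInnerProductSpace

/-- A function that is locally constant at every point of a convex set of reals
is constant on that set. -/
lemma aux_const_of_locally_const (g : ℝ → ℝ) (I : Set ℝ) (hI : Convex ℝ I)
    (hloc : ∀ m ∈ I, ∃ η > 0, ∀ s, |s - m| ≤ η → g s = g m) :
    ∀ s ∈ I, ∀ t ∈ I, g s = g t := by
  have key : ∀ s ∈ I, ∀ t ∈ I, s ≤ t → g s = g t := by
    intro s hs t ht hst
    set S : Set ℝ := {r | r ∈ Set.Icc s t ∧ g r = g s} with hSdef
    have hSne : s ∈ S := ⟨⟨le_refl s, hst⟩, rfl⟩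
    have hSbdd : BddAbove S := ⟨t, fun r hr => hr.1.2⟩
    set c := sSup S with hc
    have hsc : s ≤ c := le_csSup hSbdd hSne
    have hct : c ≤ t := csSup_le ⟨s, hSne⟩ fun r hr => hr.1.2
    have hcI : c ∈ I := hI.ordConnected.out hs ht ⟨hsc, hct⟩
    obtain ⟨η, hη, hconst⟩ := hloc c hcI
    obtain ⟨r, hrS, hrc⟩ := exists_lt_of_lt_csSup ⟨s, hSne⟩ (show c - η < c by linarith)
    have hrc' : r ≤ c := le_csSup hSbdd hrS
    have hgc : g c = g s := by
      rw [← hrS.2]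
      exact (hconst r (by rw [abs_le]; constructor <;> linarith)).symm
    rcases eq_or_lt_of_le hct with hect | hlt
    · rw [← hect, hgc]
    · exfalso
      set r' := min t (c + η) with hr'
      have hcr' : c < r' := lt_min hlt (by linarith)
      have hgr' : g r' = g s := by
        rw [hconst r' (by rw [abs_le]; constructor <;>
          [linarith [min_le_right t (c + η)]; linarith [min_le_right t (c + η)]]), hgc]
      have : r' ∈ S := ⟨⟨le_trans hsc hcr'.le, min_le_left _ _⟩, hgr'⟩
      exact absurd (le_csSup hSbdd this) (not_le.mpr hcr')
  intro s hs t ht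
  rcases le_total s t with h | h
  · exact key s hs t ht h
  · exact (key t ht s hs h).symm

/-- Identifiability of the stacked fixed effects `(β, g, a)` of
the ST-GP model. Under the same hypotheses as the single-index identifiability,
if additionally `a₁·g₁⟪β₁, x⟫ = a₂·g₂⟪β₂, x⟫` on `K` and `g₁` vanishes at some
point `t₀` of `{⟪β₁, x⟫ : x ∈ K}`, then `β₁ = β₂`, `g₁ = g₂` on
`{⟪β₁, x⟫ : x ∈ K}`, and `a₁ = a₂`. -/
theorem stacked_single_index_identifiability
    (p : ℕ) (hp : 1 ≤ p)
    (K : Set (EuclideanSpace ℝ (Fin p)))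
    (hKbdd : Bornology.IsBounded K) (hKconv : Convex ℝ K)
    (hKint : (interior K).Nonempty)
    (g₁ g₂ : ℝ → ℝ) (hg₁c : Continuous g₁) (hg₂c : Continuous g₂)
    (hg₁m : Monotone g₁) (hg₂m : Monotone g₂)
    (β₁ β₂ : EuclideanSpace ℝ (Fin p)) (hβ₁ : ‖β₁‖ = 1) (hβ₂ : ‖β₂‖ = 1)
    (a₁ a₂ : ℝ)
    (hnc : ¬ ∃ c : ℝ, ∀ x ∈ K, g₁ ⟪β₁, x⟫ = c)
    (heq : ∀ x ∈ K, g₁ ⟪β₁, x⟫ = g₂ ⟪β₂, x⟫)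
    (heqa : ∀ x ∈ K, a₁ * g₁ ⟪β₁, x⟫ = a₂ * g₂ ⟪β₂, x⟫)
    (hzero : ∃ t₀ ∈ (fun x => ⟪β₁, x⟫) '' K, g₁ t₀ = 0) :
    β₁ = β₂ ∧ (∀ t ∈ (fun x => ⟪β₁, x⟫) '' K, g₁ t = g₂ t) ∧ a₁ = a₂ := by
  obtain ⟨u₀, hu₀⟩ := hKint
  -- Step 1 : β₁ = β₂
  have hb : β₁ = β₂ := by
    by_contra hne
    set w : EuclideanSpace ℝ (Fin p) := β₁ - β₂ with hw
    have hwne : w ≠ 0 := sub_ne_zero.mpr hne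
    have hwpos : (0:ℝ) < ‖w‖ := norm_pos_iff.mpr hwne
    have h12 : ⟪β₁, β₂⟫ < 1 := by
      have h1 := norm_sub_sq_real β₁ β₂
      have h2 : (0:ℝ) < ‖β₁ - β₂‖ ^ 2 := by positivity
      rw [hβ₁, hβ₂] at h1; nlinarith
    have hw1 : (0:ℝ) < ⟪β₁, w⟫ := by
      rw [hw, inner_sub_right, real_inner_self_eq_norm_sq, hβ₁]; linarith
    have hw2 : ⟪β₂, w⟫ < 0 := by
      rw [hw, inner_sub_right, real_inner_self_eq_norm_sq, hβ₂, real_inner_comm]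
      linarith
    -- local constancy of g₁ on the image of the interior
    have hloc : ∀ m ∈ (fun x => ⟪β₁, x⟫) '' interior K,
        ∃ η > 0, ∀ s, |s - m| ≤ η → g₁ s = g₁ m := by
      rintro m ⟨u, hu, rfl⟩
      obtain ⟨ε, hε, hball⟩ := Metric.mem_nhds_iff.mp (mem_interior_iff_mem_nhds.mp hu)
      set τ : ℝ := ε / (2 * ‖w‖) with hτdef
      have hτ : 0 < τ := by positivity
      have hmem : ∀ r : ℝ, |r| ≤ τ → u + r • w ∈ K := by
        intro r hr
        apply hball
        rw [Metric.mem_ball, dist_eq_norm]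
        have : u + r • w - u = r • w := by abel
        rw [this, norm_smul, Real.norm_eq_abs]
        calc |r| * ‖w‖ ≤ τ * ‖w‖ := by nlinarith
          _ = ε / 2 := by rw [hτdef, div_mul_eq_mul_div, mul_comm (2:ℝ), ← div_div, mul_div_assoc, div_self hwpos.ne', mul_one]
          _ < ε := by linarith
      have hinner : ∀ r : ℝ, ⟪β₁, u + r • w⟫ = ⟪β₁, u⟫ + r * ⟪β₁, w⟫ := by
        intro r; rw [inner_add_right, real_inner_smul_right]
      have hinner2 : ∀ r : ℝ, ⟪β₂, u + r • w⟫ = ⟪β₂, u⟫ + r * ⟪β₂, w⟫ := by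
        intro r; rw [inner_add_right, real_inner_smul_right]
      have huK : u ∈ K := interior_subset hu
      have hbase : g₁ ⟪β₁, u⟫ = g₂ ⟪β₂, u⟫ := heq u huK
      have hA : g₁ (⟪β₁, u⟫ + τ * ⟪β₁, w⟫) = g₁ ⟪β₁, u⟫ := by
        have hx := heq (u + τ • w) (hmem τ (by rw [abs_of_pos hτ]))
        rw [hinner, hinner2] at hx
        have h1 : g₂ (⟪β₂, u⟫ + τ * ⟪β₂, w⟫) ≤ g₂ ⟪β₂, u⟫ :=
          hg₂m (by nlinarith)
        have h2 : g₁ ⟪β₁, u⟫ ≤ g₁ (⟪β₁, u⟫ + τ * ⟪β₁, w⟫) :=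
          hg₁m (by nlinarith)
        rw [hx, hbase]
        linarith [hx, hbase]
      have hB : g₁ (⟪β₁, u⟫ - τ * ⟪β₁, w⟫) = g₁ ⟪β₁, u⟫ := by
        have hx := heq (u + (-τ) • w) (hmem (-τ) (by rw [abs_neg, abs_of_pos hτ]))
        rw [hinner, hinner2] at hx
        have h1 : g₂ ⟪β₂, u⟫ ≤ g₂ (⟪β₂, u⟫ + (-τ) * ⟪β₂, w⟫) :=
          hg₂m (by nlinarith)
        have h2 : g₁ (⟪β₁, u⟫ + (-τ) * ⟪β₁, w⟫) ≤ g₁ ⟪β₁, u⟫ :=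
          hg₁m (by nlinarith)
        have : ⟪β₁, u⟫ - τ * ⟪β₁, w⟫ = ⟪β₁, u⟫ + (-τ) * ⟪β₁, w⟫ := by ring_nf
        rw [this]
        linarith [hx, hbase]
      refine ⟨τ * ⟪β₁, w⟫, by positivity, fun s hs => ?_⟩
      rw [abs_le] at hs
      have hle1 : g₁ s ≤ g₁ (⟪β₁, u⟫ + τ * ⟪β₁, w⟫) := hg₁m (by linarith [hs.2])
      have hle2 : g₁ (⟪β₁, u⟫ - τ * ⟪β₁, w⟫) ≤ g₁ s := hg₁m (by linarith [hs.1])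
      linarith [hA, hB]
    -- the image of the interior is convex
    have hIconv : Convex ℝ ((fun x => ⟪β₁, x⟫) '' interior K) := by
      rintro _ ⟨x, hx, rfl⟩ _ ⟨y, hy, rfl⟩ a b ha hb hab
      refine ⟨a • x + b • y, hKconv.interior hx hy ha hb hab, ?_⟩
      simp only [inner_add_right, real_inner_smul_right, smul_eq_mul]
    have hconstI := aux_const_of_locally_const g₁ _ hIconv hloc
    set v : ℝ := g₁ ⟪β₁, u₀⟫ with hv
    have hFint : ∀ u ∈ interior K, g₁ ⟪β₁, u⟫ = v := fun u hu =>
      hconstI _ ⟨u, hu, rfl⟩ _ ⟨u₀, hu₀, rfl⟩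
    -- extend constancy to all of K by continuity
    have hFK : ∀ x ∈ K, g₁ ⟪β₁, x⟫ = v := by
      intro x hx
      set ψ : ℝ → ℝ := fun r => g₁ (⟪β₁, x⟫ + r * ⟪β₁, u₀ - x⟫) with hψ
      have hψc : Continuous ψ := hg₁c.comp (continuous_const.add (continuous_id.mul continuous_const))
      have heqon : Set.EqOn ψ (fun _ => v) (Set.Ioc (0:ℝ) 1) := by
        intro r hr
        have hmem : x + r • (u₀ - x) ∈ interior K :=
          hKconv.add_smul_sub_mem_interior hx hu₀ hr
        have := hFint _ hmem
        rw [inner_add_right, real_inner_smul_right] at this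
        exact this
      have hcl := heqon.closure hψc continuous_const
      have h0 : (0:ℝ) ∈ closure (Set.Ioc (0:ℝ) 1) := by
        rw [closure_Ioc (by norm_num : (0:ℝ) ≠ 1)]
        exact ⟨le_refl 0, by norm_num⟩
      have := hcl h0
      simpa [hψ] using this
    exact hnc ⟨v, hFK⟩
  refine ⟨hb, ?_, ?_⟩
  · rintro t ⟨x, hx, rfl⟩
    rw [heq x hx, hb]
  · push_neg at hnc
    obtain ⟨x, hx, hxne⟩ := hnc 0
    have h1 := heqa x hx
    rw [← heq x hx] at h1
    exact mul_right_cancel₀ hxne h1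
end
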